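/- Suppose the edges of K_n are colored with b colors so that the coloring is a star edge-coloring. For each color j, let a_j be the number of edges of color j, and let b_{i,j} be the number of 3-edge paths colored i, j, i. Then for each fixed color j, the sum over all colors i of b_{i,j} is at most a_j · (n − 2a_j). -/

import Mathlib

open SimpleGraph

/-- A star edge-coloring: proper (adjacent distinct edges get different colors),
and no path with 4 edges nor 4-cycle uses at most two colors. -/
def IsStarEdgeColoring {V α : Type*} (G : SimpleGraph V) (c : Sym2 V → α) : Prop :=
  (∀ e₁ ∈ G.edgeSet, ∀ e₂ ∈ G.edgeSet, e₁ ≠ e₂ → (∃ v, v ∈ e₁ ∧ v ∈ e₂) → c e₁ ≠ c e₂) ∧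
  (∀ (u v : V) (p : G.Walk u v), p.IsPath → p.length = 4 →
      ¬ ∃ a b : α, ∀ e ∈ p.edges, c e = a ∨ c e = b) ∧
  (∀ (u : V) (p : G.Walk u u), p.IsCycle → p.length = 4 →
      ¬ ∃ a b : α, ∀ e ∈ p.edges, c e = a ∨ c e = b)

/-- The star chromatic index. -/
noncomputable def starChromaticIndex {V : Type*} (G : SimpleGraph V) : ℕ :=
  sInf {k | ∃ c : Sym2 V → Fin k, IsStarEdgeColoring G c}

section Aux
variable {n b : ℕ} {c : Sym2 (Fin n) → Fin b}

-- properness, convenient form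
lemma proper (hc : IsStarEdgeColoring (⊤ : SimpleGraph (Fin n)) c)
    {u v u' v' : Fin n} (huv : u ≠ v) (huv' : u' ≠ v')
    (hne : s(u,v) ≠ s(u',v')) (hshare : ∃ w, w ∈ s(u,v) ∧ w ∈ s(u',v')) :
    c s(u,v) ≠ c s(u',v') := by
  exact hc.1 _ (by simpa using huv) _ (by simpa using huv') hne hshare

lemma no4path (hc : IsStarEdgeColoring (⊤ : SimpleGraph (Fin n)) c)
    {v0 v1 v2 v3 v4 : Fin n}
    (h01 : v0 ≠ v1) (h02 : v0 ≠ v2) (h03 : v0 ≠ v3) (h04 : v0 ≠ v4)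
    (h12 : v1 ≠ v2) (h13 : v1 ≠ v3) (h14 : v1 ≠ v4)
    (h23 : v2 ≠ v3) (h24 : v2 ≠ v4) (h34 : v3 ≠ v4)
    {x y : Fin b}
    (e0 : c s(v0,v1) = x) (e1 : c s(v1,v2) = y) (e2 : c s(v2,v3) = x)
    (e3 : c s(v3,v4) = y) : False := by
  have a01 : (⊤ : SimpleGraph (Fin n)).Adj v0 v1 := by simpa using h01
  have a12 : (⊤ : SimpleGraph (Fin n)).Adj v1 v2 := by simpa using h12
  have a23 : (⊤ : SimpleGraph (Fin n)).Adj v2 v3 := by simpa using h23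
  have a34 : (⊤ : SimpleGraph (Fin n)).Adj v3 v4 := by simpa using h34
  let p : (⊤ : SimpleGraph (Fin n)).Walk v0 v4 :=
    .cons a01 (.cons a12 (.cons a23 (.cons a34 .nil)))
  refine hc.2.1 v0 v4 p ?_ rfl ⟨x, y, ?_⟩
  · rw [Walk.isPath_def]
    simp [p, Walk.support_cons, h01, h02, h03, h04, h12, h13, h14, h23, h24, h34]
  · intro e he
    simp only [p, Walk.edges_cons, Walk.edges_nil, List.mem_cons, List.not_mem_nil,
      or_false] at he
    rcases he with rfl | rfl | rfl | rfl <;> simp [e0, e1, e2, e3]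

lemma no4cycle (hc : IsStarEdgeColoring (⊤ : SimpleGraph (Fin n)) c)
    {v0 v1 v2 v3 : Fin n}
    (h01 : v0 ≠ v1) (h02 : v0 ≠ v2) (h03 : v0 ≠ v3)
    (h12 : v1 ≠ v2) (h13 : v1 ≠ v3) (h23 : v2 ≠ v3)
    {x y : Fin b} (hxy : x ≠ y)
    (e0 : c s(v0,v1) = x) (e1 : c s(v1,v2) = y) (e2 : c s(v2,v3) = x)
    (e3 : c s(v3,v0) = y) : False := by
  have a01 : (⊤ : SimpleGraph (Fin n)).Adj v0 v1 := by simpa using h01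
  have a12 : (⊤ : SimpleGraph (Fin n)).Adj v1 v2 := by simpa using h12
  have a23 : (⊤ : SimpleGraph (Fin n)).Adj v2 v3 := by simpa using h23
  have a30 : (⊤ : SimpleGraph (Fin n)).Adj v3 v0 := by simpa using h03.symm
  let p : (⊤ : SimpleGraph (Fin n)).Walk v0 v0 :=
    .cons a01 (.cons a12 (.cons a23 (.cons a30 .nil)))
  refine hc.2.2 v0 p ?_ rfl ⟨x, y, ?_⟩
  · rw [Walk.isCycle_def]
    refine ⟨?_, by simp [p], ?_⟩
    · rw [Walk.isTrail_def]
      simp only [p, Walk.edges_cons, Walk.edges_nil]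
      have d1 : s(v0,v1) ≠ s(v1,v2) := by
        simp [Sym2.eq_iff]; tauto
      have d2 : s(v0,v1) ≠ s(v2,v3) := by
        simp [Sym2.eq_iff]; tauto
      have d3 : s(v0,v1) ≠ s(v3,v0) := by
        simp [Sym2.eq_iff]; tauto
      have d4 : s(v1,v2) ≠ s(v2,v3) := by
        simp [Sym2.eq_iff]; tauto
      have d5 : s(v1,v2) ≠ s(v3,v0) := by
        simp [Sym2.eq_iff]; tauto
      have d6 : s(v2,v3) ≠ s(v3,v0) := by
        simp [Sym2.eq_iff]; tauto
      simp [d1, d2, d3, d4, d5, d6]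
    · simp [p, Walk.support_cons, h12, h13, h23, h01.symm, h02.symm, h03.symm]
  · intro e he
    simp only [p, Walk.edges_cons, Walk.edges_nil, List.mem_cons, List.not_mem_nil,
      or_false] at he
    rcases he with rfl | rfl | rfl | rfl <;> simp [e0, e1, e2, e3]

lemma proper_unique (hc : IsStarEdgeColoring (⊤ : SimpleGraph (Fin n)) c)
    {u v w : Fin n} (huv : u ≠ v) (huw : u ≠ w) (h : c s(u,v) = c s(u,w)) : v = w := by
  by_contra hvw
  exact proper hc huv huw (by simp [Sym2.eq_iff]; tauto) ⟨u, by simp, by simp⟩ h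

section Main
variable (n b c j)

/-- ordered pairs forming an edge of color j -/
def Dj : Finset (Fin n × Fin n) :=
  Finset.univ.filter (fun p => p.1 ≠ p.2 ∧ c s(p.1, p.2) = j)

/-- vertices not covered by color class j -/
def Uj : Finset (Fin n) :=
  Finset.univ.filter (fun v => ∀ w, v ≠ w → c s(v, w) ≠ j)

def Ej : Finset (Sym2 (Fin n)) :=
  (⊤ : SimpleGraph (Fin n)).edgeFinset.filter (fun e => c e = j)

lemma Dj_card : (Dj n b c j).card = 2 * (Ej n b c j).card := by
  rw [Finset.card_eq_sum_card_fiberwise (f := fun p => s(p.1, p.2)) (t := Ej n b c j)]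
  · rw [Finset.sum_congr rfl (g := fun _ => 2), Finset.sum_const, smul_eq_mul, mul_comm]
    intro e he
    induction e using Sym2.ind with
    | _ u v =>
      simp only [Ej, Finset.mem_filter, mem_edgeFinset, mem_edgeSet, top_adj] at he
      obtain ⟨huv, hcuv⟩ := he
      have : (Dj n b c j).filter (fun p => s(p.1, p.2) = s(u, v)) = {(u, v), (v, u)} := by
        ext p
        simp only [Dj, Finset.mem_filter, Finset.mem_univ, true_and, Finset.mem_insert,
          Finset.mem_singleton, Sym2.eq_iff, Prod.ext_iff]
        constructor
        · rintro ⟨-, ⟨rfl, rfl⟩ | ⟨rfl, rfl⟩⟩ <;> tauto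
        · rintro (⟨rfl, rfl⟩ | ⟨rfl, rfl⟩)
          · exact ⟨⟨huv, hcuv⟩, by tauto⟩
          · exact ⟨⟨huv.symm, by rwa [Sym2.eq_swap]⟩, by tauto⟩
      rw [this, Finset.card_insert_of_notMem (by simp [Prod.ext_iff]; tauto),
        Finset.card_singleton]
  · intro p hp
    simp only [Finset.mem_coe, Dj, Finset.mem_filter, Finset.mem_univ, true_and] at hp
    simp only [Finset.mem_coe, Ej, Finset.mem_filter, mem_edgeFinset, mem_edgeSet, top_adj]
    exact ⟨hp.1, hp.2⟩

lemma Uj_card (hc : IsStarEdgeColoring (⊤ : SimpleGraph (Fin n)) c) :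
    (Uj n b c j).card = n - 2 * (Ej n b c j).card := by
  have himg : (Uj n b c j) = Finset.univ \ (Dj n b c j).image Prod.fst := by
    ext v
    simp only [Uj, Dj, Finset.mem_filter, Finset.mem_univ, true_and, Finset.mem_sdiff,
      Finset.mem_image, Prod.exists]
    constructor
    · rintro h ⟨a, w, ⟨haw, hcol⟩, rfl⟩
      exact h w haw hcol
    · intro h w hvw hcol
      exact h ⟨v, w, ⟨hvw, hcol⟩, rfl⟩
  have hinj : Set.InjOn (Prod.fst : Fin n × Fin n → Fin n) ↑(Dj n b c j) := by
    intro p hp q hq h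
    simp only [Finset.coe_filter, Dj, Set.mem_setOf_eq, Finset.mem_univ, true_and] at hp hq
    have := proper_unique hc hp.1 (h ▸ hq.1) (by rw [hp.2, h, hq.2])
    exact Prod.ext h this
  rw [himg, Finset.card_sdiff_of_subset (Finset.subset_univ _), Finset.card_image_of_injOn hinj,
    Dj_card, Finset.card_univ, Fintype.card_fin]

end Main

end Aux

/-- Number of edges of `K_n` of color `i`. -/
def colorClassCard (n b : ℕ) (c : Sym2 (Fin n) → Fin b) (i : Fin b) : ℕ :=
  ((⊤ : SimpleGraph (Fin n)).edgeFinset.filter (fun e => c e = i)).card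

/-- Number of 3-edge paths in `K_n` colored `i, j, i` (each path counted once,
normalized so that the first endpoint is smaller than the last). -/
def biColoredPathCard (n b : ℕ) (c : Sym2 (Fin n) → Fin b) (i j : Fin b) : ℕ :=
  (Finset.univ.filter (fun t : Fin n × Fin n × Fin n × Fin n =>
      t.1 ≠ t.2.1 ∧ t.1 ≠ t.2.2.1 ∧ t.1 ≠ t.2.2.2 ∧ t.2.1 ≠ t.2.2.1 ∧
      t.2.1 ≠ t.2.2.2 ∧ t.2.2.1 ≠ t.2.2.2 ∧ t.1 < t.2.2.2 ∧
      c s(t.1, t.2.1) = i ∧ c s(t.2.1, t.2.2.1) = j ∧ c s(t.2.2.1, t.2.2.2) = i)).card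

/-- in a star edge-coloring of K_n, for each color j,
∑_i b_{i,j} ≤ a_j · (n − 2a_j). -/
theorem sum_biColoredPaths_le (n b : ℕ) (c : Sym2 (Fin n) → Fin b)
    (hc : IsStarEdgeColoring (⊤ : SimpleGraph (Fin n)) c) (j : Fin b) :
    ∑ i : Fin b, biColoredPathCard n b c i j ≤
      colorClassCard n b c j * (n - 2 * colorClassCard n b c j) := by
  classical
  have csymm : ∀ a b : Fin n, c s(a, b) = c s(b, a) := fun a b => by rw [Sym2.eq_swap]
  have hclass : colorClassCard n b c j = (Ej n b c j).card := rfl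
  set X : Finset (Fin n × Fin n × Fin n × Fin n) := Finset.univ.filter
    (fun t => t.1 ≠ t.2.1 ∧ t.1 ≠ t.2.2.1 ∧ t.1 ≠ t.2.2.2 ∧ t.2.1 ≠ t.2.2.1 ∧
      t.2.1 ≠ t.2.2.2 ∧ t.2.2.1 ≠ t.2.2.2 ∧ t.1 < t.2.2.2 ∧
      c s(t.2.1, t.2.2.1) = j ∧ c s(t.1, t.2.1) = c s(t.2.2.1, t.2.2.2)) with hX
  have hsum : ∑ i : Fin b, biColoredPathCard n b c i j = X.card := by
    rw [Finset.card_eq_sum_card_fiberwise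
      (f := fun t => c s(t.1, t.2.1)) (t := Finset.univ) (fun _ _ => Finset.mem_univ _)]
    refine Finset.sum_congr rfl fun i _ => ?_
    unfold biColoredPathCard
    congr 1
    ext t
    simp only [hX, Finset.mem_filter, Finset.mem_univ, true_and]
    constructor
    · rintro ⟨a1, a2, a3, a4, a5, a6, a7, a8, a9, a10⟩
      exact ⟨⟨a1, a2, a3, a4, a5, a6, a7, a9, a8.trans a10.symm⟩, a8⟩
    · rintro ⟨⟨a1, a2, a3, a4, a5, a6, a7, a9, aeq⟩, a8⟩
      exact ⟨a1, a2, a3, a4, a5, a6, a7, a8, a9, aeq ▸ a8⟩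
  have hle : X.card ≤ ((Ej n b c j) ×ˢ (Uj n b c j)).card := by
    apply Finset.card_le_card_of_injOn (fun t => (s(t.2.1, t.2.2.1), t.1))
    · rintro ⟨t1, t2, t3, t4⟩ ht
      simp only [hX, Finset.mem_coe, Finset.mem_filter, Finset.mem_univ, true_and] at ht
      obtain ⟨h1, h2, h3, h4, h5, h6, h7, h8, h9⟩ := ht
      rw [Finset.mem_coe, Finset.mem_product]
      constructor
      · simp only [Ej, Finset.mem_filter, mem_edgeFinset, mem_edgeSet, top_adj]
        exact ⟨h4, h8⟩
      · simp only [Uj, Finset.mem_filter, Finset.mem_univ, true_and]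
        intro w hw hcol
        have hij : c s(t1, t2) ≠ j := by
          intro h
          exact h2 (proper_unique hc h1.symm h4
            ((csymm t2 t1).trans (h.trans h8.symm)))
        have hw2 : w ≠ t2 := fun h => hij (h ▸ hcol)
        have hw3 : w ≠ t3 := by
          rintro rfl
          exact h1 (proper_unique hc h2.symm h4.symm
            ((csymm w t1).trans (hcol.trans (h8.symm.trans (csymm t2 w)))))
        by_cases hw4 : w = t4
        · subst hw4
          exact no4cycle hc h1 h2 h3 h4 h5 h6 hij rfl h8 h9.symm
            ((csymm w t1).trans hcol)
        · exact no4path hc hw.symm hw2 hw3 hw4 h1 h2 h3 h4 h5 h6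
            ((csymm w t1).trans hcol) rfl h8 h9.symm
    · rintro ⟨t1, t2, t3, t4⟩ ht ⟨t1', t2', t3', t4'⟩ ht' heq
      simp only [hX, Finset.coe_filter, Set.mem_setOf_eq, Finset.mem_univ, true_and]
        at ht ht'
      obtain ⟨h1, h2, h3, h4, h5, h6, h7, h8, h9⟩ := ht
      obtain ⟨h1', h2', h3', h4', h5', h6', h7', h8', h9'⟩ := ht'
      rw [Prod.mk.injEq] at heq
      obtain ⟨hs, ht1⟩ := heq
      subst ht1
      rw [Sym2.eq_iff] at hs
      rcases hs with ⟨ha, hb⟩ | ⟨ha, hb⟩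
      · subst ha; subst hb
        have : t4 = t4' := proper_unique hc h6 h6' (h9.symm.trans h9')
        rw [this]
      · subst ha; subst hb
        exfalso
        have hii' : c s(t1, t2) ≠ c s(t1, t3) := by
          intro h
          exact h4 (proper_unique hc h1 h2 h)
        by_cases hne : t4 = t4'
        · subst hne
          exact no4cycle hc h2.symm h4.symm h6 h1 h3 h5
            (fun h => hii' (h.symm.trans (csymm t3 t1)))
            rfl rfl (h9'.symm.trans (csymm t1 t3)) ((csymm t4 t3).trans h9.symm)
        · exact no4path hc h6.symm h3.symm h5.symm hne h2.symm h4.symm h5' h1 h3' h6'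
            rfl rfl (h9.trans (csymm t3 t4)) (h9'.symm.trans (csymm t1 t3))
  calc ∑ i : Fin b, biColoredPathCard n b c i j = X.card := hsum
    _ ≤ ((Ej n b c j) ×ˢ (Uj n b c j)).card := hle
    _ = (Ej n b c j).card * (Uj n b c j).card := Finset.card_product _ _
    _ = colorClassCard n b c j * (n - 2 * colorClassCard n b c j) := by
        rw [Uj_card n b c j hc, hclass]
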